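/- State-feedback SLP sufficiency: let Φx, Φu be strictly proper stable rational matrices satisfying (zI - A)Φx - BΦu = I, with Φx invertible. Define K = Φu·Φx⁻¹, S_xu = Φx·B and S_uu = I + Φu·B. Then [[zI - A, -B],[-K, I]]·[[Φx, S_xu],[Φu, S_uu]] = I, and S_xu, S_uu are stable proper. -/

import Mathlib

set_option synthInstance.maxHeartbeats 1000000
set_option maxHeartbeats 1000000

noncomputable section

/-- A rational function is proper if its numerator degree does not exceed its denominator
degree. -/
def RatFunc.Proper (r : RatFunc ℝ) : Prop := r.num.degree ≤ r.denom.degree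

/-- A rational function is strictly proper if its numerator degree is strictly smaller than its
denominator degree. -/
def RatFunc.StrictlyProper (r : RatFunc ℝ) : Prop := r.num.degree < r.denom.degree

/-- A rational function is stable if all (complex) roots of its denominator lie strictly inside
the unit disc. -/
def RatFunc.Stable (r : RatFunc ℝ) : Prop :=
  ∀ w : ℂ, (r.denom.map (algebraMap ℝ ℂ)).IsRoot w → ‖w‖ < 1

open Polynomial

def GoodRep (r : RatFunc ℝ) : Prop :=
  ∃ p q : ℝ[X], q ≠ 0 ∧ r = algebraMap _ _ p / algebraMap _ _ q ∧ p.degree ≤ q.degree ∧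
    ∀ w : ℂ, (q.map (algebraMap ℝ ℂ)).IsRoot w → ‖w‖ < 1

lemma goodRep_of (r : RatFunc ℝ) (h : r.Proper ∧ r.Stable) : GoodRep r :=
  ⟨r.num, r.denom, r.denom_ne_zero, (RatFunc.num_div_denom r).symm, h.1, h.2⟩

lemma proper_of_goodRep {r : RatFunc ℝ} (h : GoodRep r) : r.Proper := by
  obtain ⟨p, q, hq, hr, hdeg, -⟩ := h
  rcases eq_or_ne r 0 with rfl | hr0
  · simp [RatFunc.Proper]
  have hcross : r.num * q = p * r.denom := (RatFunc.num_mul_eq_mul_denom_iff hq).mpr hr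
  have hnum : r.num ≠ 0 := RatFunc.num_ne_zero hr0
  have hp : p ≠ 0 := by
    rintro rfl
    rw [map_zero, zero_div] at hr; exact hr0 hr
  have hdenom := r.denom_ne_zero
  have h1 : r.num.degree + q.degree = p.degree + r.denom.degree := by
    rw [← degree_mul, ← degree_mul, hcross]
  have h1' : r.num.natDegree + q.natDegree = p.natDegree + r.denom.natDegree := by
    rw [← natDegree_mul hnum hq, ← natDegree_mul hp hdenom, hcross]
  have h2' : p.natDegree ≤ q.natDegree := natDegree_le_natDegree hdeg
  show r.num.degree ≤ r.denom.degree
  rw [degree_eq_natDegree hnum, degree_eq_natDegree hdenom]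
  exact_mod_cast show r.num.natDegree ≤ r.denom.natDegree by omega

lemma stable_of_goodRep {r : RatFunc ℝ} (h : GoodRep r) : r.Stable := by
  obtain ⟨p, q, hq, hr, -, hroot⟩ := h
  have hdvd : r.denom ∣ q := (RatFunc.denom_dvd hq).mpr ⟨p, hr⟩
  obtain ⟨d, rfl⟩ := hdvd
  intro w hw
  apply hroot
  simpa [Polynomial.IsRoot, Polynomial.map_mul] using Or.inl hw

lemma goodRep_add {r s : RatFunc ℝ} (hr : GoodRep r) (hs : GoodRep s) : GoodRep (r + s) := by
  obtain ⟨p1, q1, hq1, rfl, hd1, hs1⟩ := hr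
  obtain ⟨p2, q2, hq2, rfl, hd2, hs2⟩ := hs
  refine ⟨p1 * q2 + p2 * q1, q1 * q2, mul_ne_zero hq1 hq2, ?_, ?_, ?_⟩
  · rw [div_add_div _ _ (RatFunc.algebraMap_ne_zero hq1) (RatFunc.algebraMap_ne_zero hq2)]
    push_cast [map_add, map_mul]
    ring_nf
  · refine le_trans (degree_add_le _ _) (max_le ?_ ?_) <;> rw [degree_mul, degree_mul]
    · exact add_le_add_left hd1 _
    · rw [add_comm (degree q1)]; exact add_le_add_left hd2 _
  · intro w hw
    rw [Polynomial.map_mul, Polynomial.IsRoot, Polynomial.eval_mul] at hw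
    rcases mul_eq_zero.mp hw with h | h
    · exact hs1 w h
    · exact hs2 w h

lemma goodRep_mul {r s : RatFunc ℝ} (hr : GoodRep r) (hs : GoodRep s) : GoodRep (r * s) := by
  obtain ⟨p1, q1, hq1, rfl, hd1, hs1⟩ := hr
  obtain ⟨p2, q2, hq2, rfl, hd2, hs2⟩ := hs
  refine ⟨p1 * p2, q1 * q2, mul_ne_zero hq1 hq2, ?_, ?_, ?_⟩
  · rw [div_mul_div_comm, ← map_mul, ← map_mul]
  · rw [degree_mul, degree_mul]; exact add_le_add hd1 hd2
  · intro w hw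
    rw [Polynomial.map_mul, Polynomial.IsRoot, Polynomial.eval_mul] at hw
    rcases mul_eq_zero.mp hw with h | h
    · exact hs1 w h
    · exact hs2 w h

lemma goodRep_const (c : ℝ) : GoodRep (algebraMap ℝ (RatFunc ℝ) c) := by
  refine ⟨C c, 1, one_ne_zero, ?_, ?_, ?_⟩
  · simp [RatFunc.algebraMap_eq_C, RatFunc.algebraMap_C]
  · simpa using degree_C_le
  · intro w hw; simp [Polynomial.IsRoot] at hw

lemma goodRep_zero : GoodRep 0 := by simpa using goodRep_const 0
lemma goodRep_one : GoodRep 1 := by simpa using goodRep_const 1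

lemma good_sum {ι : Type*} (s : Finset ι) (f : ι → RatFunc ℝ) (h : ∀ i ∈ s, GoodRep (f i)) :
    GoodRep (∑ i ∈ s, f i) :=
  Finset.sum_induction f GoodRep (fun _ _ ha hb => goodRep_add ha hb) goodRep_zero h


/-- State-feedback SLP (sufficiency): if `Φx, Φu` are strictly proper stable rational matrices
with `(zI - A) Φx - B Φu = I` and `Φx` is invertible, then setting `K = Φu Φx⁻¹`,
`S_xu = Φx B`, `S_uu = I + Φu B` yields
`[[zI - A, -B],[-K, I]] * [[Φx, S_xu],[Φu, S_uu]] = I`, with `S_xu, S_uu` stable proper. -/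
theorem state_feedback_slp_sufficiency {n m : Type*} [Fintype n] [Fintype m]
    [DecidableEq n] [DecidableEq m]
    (A : Matrix n n ℝ) (B : Matrix n m ℝ)
    (Φx : Matrix n n (RatFunc ℝ)) (Φu : Matrix m n (RatFunc ℝ))
    (hΦx : ∀ i j, (Φx i j).StrictlyProper ∧ (Φx i j).Stable)
    (hΦu : ∀ i j, (Φu i j).StrictlyProper ∧ (Φu i j).Stable)
    (hinv : IsUnit Φx.det)
    (haffine : ((RatFunc.X : RatFunc ℝ) • (1 : Matrix n n (RatFunc ℝ))
        - A.map (algebraMap ℝ (RatFunc ℝ))) * Φx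
        - (B.map (algebraMap ℝ (RatFunc ℝ))) * Φu = 1) :
    Matrix.fromBlocks
        ((RatFunc.X : RatFunc ℝ) • (1 : Matrix n n (RatFunc ℝ))
          - A.map (algebraMap ℝ (RatFunc ℝ)))
        (-(B.map (algebraMap ℝ (RatFunc ℝ)))) (-(Φu * Φx⁻¹)) (1 : Matrix m m (RatFunc ℝ))
        * Matrix.fromBlocks Φx (Φx * B.map (algebraMap ℝ (RatFunc ℝ)))
            Φu (1 + Φu * B.map (algebraMap ℝ (RatFunc ℝ))) = 1 ∧
    (∀ i j, ((Φx * B.map (algebraMap ℝ (RatFunc ℝ))) i j).Proper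
        ∧ ((Φx * B.map (algebraMap ℝ (RatFunc ℝ))) i j).Stable) ∧
    (∀ i j, (((1 + Φu * B.map (algebraMap ℝ (RatFunc ℝ)) : Matrix m m (RatFunc ℝ))) i j).Proper
        ∧ (((1 + Φu * B.map (algebraMap ℝ (RatFunc ℝ)) : Matrix m m (RatFunc ℝ))) i j).Stable) := by
  set Bm : Matrix n m (RatFunc ℝ) := B.map (algebraMap ℝ (RatFunc ℝ)) with hBm
  set zA : Matrix n n (RatFunc ℝ) := (RatFunc.X : RatFunc ℝ) • (1 : Matrix n n (RatFunc ℝ))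
    - A.map (algebraMap ℝ (RatFunc ℝ)) with hzA
  have hK : Φu * Φx⁻¹ * Φx = Φu := by
    rw [Matrix.mul_assoc, Matrix.nonsing_inv_mul Φx hinv, Matrix.mul_one]
  have hgoodx : ∀ i j, GoodRep (Φx i j) := fun i j =>
    goodRep_of _ ⟨le_of_lt (hΦx i j).1, (hΦx i j).2⟩
  have hgoodu : ∀ i j, GoodRep (Φu i j) := fun i j =>
    goodRep_of _ ⟨le_of_lt (hΦu i j).1, (hΦu i j).2⟩
  have hgoodxB : ∀ i j, GoodRep ((Φx * Bm) i j) := by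
    intro i j
    rw [Matrix.mul_apply]
    exact good_sum _ _ fun k _ => goodRep_mul (hgoodx i k) (goodRep_const (B k j))
  have hgooduB : ∀ i j, GoodRep ((Φu * Bm) i j) := by
    intro i j
    rw [Matrix.mul_apply]
    exact good_sum _ _ fun k _ => goodRep_mul (hgoodu i k) (goodRep_const (B k j))
  refine ⟨?_, ?_, ?_⟩
  · rw [Matrix.fromBlocks_multiply, ← Matrix.fromBlocks_one]
    rw [Matrix.fromBlocks_inj]
    refine ⟨?_, ?_, ?_, ?_⟩
    · rw [Matrix.neg_mul, ← sub_eq_add_neg]; exact haffine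
    · have h2 : zA * (Φx * Bm) = Bm * Φu * Bm + Bm := by
        rw [← Matrix.mul_assoc, sub_eq_iff_eq_add.mp haffine, Matrix.add_mul, Matrix.one_mul]
        abel
      rw [h2, Matrix.neg_mul, Matrix.mul_add, Matrix.mul_one, ← Matrix.mul_assoc]
      abel
    · rw [Matrix.one_mul, Matrix.neg_mul, hK, neg_add_cancel]
    · rw [Matrix.one_mul, Matrix.neg_mul, ← Matrix.mul_assoc, hK]
      abel
  · intro i j
    exact ⟨proper_of_goodRep (hgoodxB i j), stable_of_goodRep (hgoodxB i j)⟩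
  · intro i j
    have hg : GoodRep ((1 + Φu * Bm : Matrix m m (RatFunc ℝ)) i j) := by
      rw [Matrix.add_apply]
      refine goodRep_add ?_ (hgooduB i j)
      by_cases h : i = j
      · subst h; simpa using goodRep_one
      · simpa [Matrix.one_apply_ne h] using goodRep_zero
    exact ⟨proper_of_goodRep hg, stable_of_goodRep hg⟩
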